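/- The sgn-isotypic component X_r[sgn] = {x ∈ X_r : w·x = sgn(w)x for all w ∈ W} equals the space of antisymmetric tensors in (U′_r)^{⊗p}, where U′_r = span{u^{2i−1} : 1 ≤ i ≤ m−1} ⊆ U_r; consequently X_r[sgn] = {0} if and only if m < p+1, and dim X_r[sgn] = binom(m−1, p) when m ≥ p+1. -/

import Mathlib

/-!
STATEMENT 18.  Let `p ≥ 2`, let `W = 𝔖_p ⋉ μ₂^p` be the hyperoctahedral group
(Weyl group of type `B_p`) with sign character `sgn(σ,ε) = sign(σ)·ε₁⋯ε_p`.  Let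
`r = 2m-1` be an odd positive integer, `U_r = ⊕_{j=0}^{r-1} ℂ u^j` with
`μ₂`-action `(±1)·u^j = (±1)^j u^j`, and `X_r = U_r^{⊗p}` the `W`-module on which
`μ₂^p` acts componentwise and `𝔖_p` permutes the tensor factors.

Theorem: the `sgn`-isotypic component `X_r[sgn]` equals the space of antisymmetric
tensors in `(U'_r)^{⊗p}` where `U'_r = span{u^{2i-1} : 1 ≤ i ≤ m-1}`; consequently
`X_r[sgn] = 0` iff `m < p+1`, and `dim X_r[sgn] = binom(m-1,p)` when `m ≥ p+1`.
-/

noncomputable section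
open scoped TensorProduct

variable (m p : ℕ)

/-- `U_r = ⊕_{j=0}^{r-1} ℂ u^j` for `r = 2m-1`, realised as `Fin (2m-1) → ℂ`
with `u^j` the `j`-th coordinate vector. -/
abbrev Ur (m : ℕ) := Fin (2 * m - 1) → ℂ

/-- `X_r = U_r^{⊗p}`. -/
abbrev Xr (m p : ℕ) := ⨂[ℂ] (_ : Fin p), Ur m

/-- The action of `e ∈ μ₂ = {±1}` on `U_r`:  `u^j ↦ e^j u^j`. -/
def muAct (e : ℤˣ) : Ur m →ₗ[ℂ] Ur m :=
  LinearMap.pi fun j : Fin (2 * m - 1) =>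
    (((e : ℤ) : ℂ) ^ (j : ℕ)) • LinearMap.proj j

/-- The componentwise action of `ε ∈ μ₂^p` on `X_r`. -/
def epsAct (ε : Fin p → ℤˣ) : Xr m p →ₗ[ℂ] Xr m p :=
  PiTensorProduct.map fun i => muAct m (ε i)

/-- The action of a permutation `σ ∈ 𝔖_p` on `X_r`, permuting the tensor factors. -/
def permAct (σ : Equiv.Perm (Fin p)) : Xr m p →ₗ[ℂ] Xr m p :=
  (PiTensorProduct.reindex ℂ (fun _ : Fin p => Ur m) σ).toLinearMap

/-- The `sgn`-isotypic component
`X_r[sgn] = {x | w·x = sgn(w) x for all w = (σ,ε) ∈ W}`. -/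
def XrSgn : Submodule ℂ (Xr m p) :=
  ⨅ (σ : Equiv.Perm (Fin p)) (ε : Fin p → ℤˣ),
    LinearMap.ker (permAct m p σ ∘ₗ epsAct m p ε -
      ((((Equiv.Perm.sign σ : ℤ) : ℂ) * ∏ i, ((ε i : ℤ) : ℂ)) • LinearMap.id))

/-- `U'_r = span{u^{2i-1} : 1 ≤ i ≤ m-1}`, the span of the odd basis vectors. -/
def Uodd : Submodule ℂ (Ur m) :=
  Submodule.span ℂ {f | ∃ j : Fin (2 * m - 1), Odd (j : ℕ) ∧ f = Pi.single j 1}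

/-- The subspace `(U'_r)^{⊗p} ⊆ X_r`, spanned by the pure tensors with all entries
in `U'_r`. -/
def UoddTensors : Submodule ℂ (Xr m p) :=
  Submodule.span ℂ
    {x | ∃ v : Fin p → Ur m, (∀ i, v i ∈ Uodd m) ∧ x = PiTensorProduct.tprod ℂ v}

/-- The antisymmetric tensors in `X_r`. -/
def antisym : Submodule ℂ (Xr m p) :=
  ⨅ σ : Equiv.Perm (Fin p),
    LinearMap.ker (permAct m p σ - (((Equiv.Perm.sign σ : ℤ) : ℂ) • LinearMap.id))

namespace St18
abbrev K (m p : ℕ) := Fin p → Fin (2 * m - 1)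

/-- coordinate functional -/
def coordFun (k : K m p) : Xr m p →ₗ[ℂ] ℂ :=
  PiTensorProduct.lift
    ((MultilinearMap.mkPiAlgebra ℂ (Fin p) ℂ).compLinearMap fun i => LinearMap.proj (k i))

/-- basis pure tensor -/
def T (k : K m p) : Xr m p := PiTensorProduct.tprod ℂ fun i => Pi.single (k i) 1

lemma coordFun_tprod (k : K m p) (v : Fin p → Ur m) :
    coordFun m p k (PiTensorProduct.tprod ℂ v) = ∏ i, v i (k i) := by
  simp [coordFun]

lemma coordFun_T (k j : K m p) :
    coordFun m p j (T m p k) = if j = k then 1 else 0 := by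
  rw [T, coordFun_tprod]
  by_cases h : j = k
  · subst h; simp
  · rw [if_neg h]
    obtain ⟨i, hi⟩ : ∃ i, j i ≠ k i := by
      by_contra hc; push_neg at hc; exact h (funext hc)
    exact Finset.prod_eq_zero (Finset.mem_univ i) (by simp [Pi.single_apply, hi])

/-- expansion of any tensor in coordinates -/
lemma expand (x : Xr m p) : ∑ k : K m p, coordFun m p k x • T m p k = x := by
  induction x using PiTensorProduct.induction_on with
  | smul_tprod r v =>
    simp only [map_smul]
    simp only [smul_eq_mul, ← smul_smul, ← Finset.smul_sum]
    congr 1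
    conv_rhs => rw [show v = fun i => ∑ j, Pi.single j (v i j) by
      funext i; exact (Finset.univ_sum_single (v i)).symm]
    simp only [coordFun_tprod]
    rw [show (PiTensorProduct.tprod ℂ fun i => ∑ j, Pi.single j (v i j)) =
        ∑ k : K m p, PiTensorProduct.tprod ℂ fun i => Pi.single (k i) (v i (k i)) from
      MultilinearMap.map_sum _ _]
    refine Finset.sum_congr rfl fun k _ => ?_
    rw [T, show (fun i => Pi.single (k i) (v i (k i))) =
        fun i => (v i (k i)) • (Pi.single (k i) 1 : Ur m) by
      funext i; rw [← Pi.single_smul]; norm_num,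
      MultilinearMap.map_smul_univ]
  | add x y hx hy =>
    simp only [map_add, add_smul]
    rw [Finset.sum_add_distrib, hx, hy]

lemma coord_inj {x y : Xr m p} (h : ∀ k, coordFun m p k x = coordFun m p k y) : x = y := by
  rw [← expand m p x, ← expand m p y]
  exact Finset.sum_congr rfl fun k _ => by rw [h k]

end St18
namespace St18

lemma muAct_apply (e : ℤˣ) (w : Ur m) (j : Fin (2 * m - 1)) :
    muAct m e w j = ((e : ℤ) : ℂ) ^ (j : ℕ) * w j := by
  simp [muAct]

lemma coordFun_perm_eps (σ : Equiv.Perm (Fin p)) (ε : Fin p → ℤˣ) (j : K m p) (x : Xr m p) :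
    coordFun m p j (permAct m p σ (epsAct m p ε x)) =
      (∏ i, ((ε i : ℤ) : ℂ) ^ ((j (σ i)) : ℕ)) * coordFun m p (j ∘ σ) x := by
  induction x using PiTensorProduct.induction_on with
  | smul_tprod r v =>
    simp only [map_smul, smul_eq_mul]
    rw [epsAct, PiTensorProduct.map_tprod, permAct, LinearEquiv.coe_coe,
      PiTensorProduct.reindex_tprod, coordFun_tprod, coordFun_tprod]
    have : ∏ i, muAct m (ε (σ.symm i)) (v (σ.symm i)) (j i) =
        ∏ i, muAct m (ε i) (v i) (j (σ i)) := by
      refine Fintype.prod_equiv σ.symm _ _ fun i => ?_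
      rw [Equiv.apply_symm_apply]
    rw [this]
    simp only [muAct_apply, Function.comp_apply]
    rw [Finset.prod_mul_distrib]
    ring
  | add x y hx hy =>
    simp only [map_add, hx, hy]; ring

lemma coordFun_perm (σ : Equiv.Perm (Fin p)) (j : K m p) (x : Xr m p) :
    coordFun m p j (permAct m p σ x) = coordFun m p (j ∘ σ) x := by
  induction x using PiTensorProduct.induction_on with
  | smul_tprod r v =>
    simp only [map_smul, smul_eq_mul]
    rw [permAct, LinearEquiv.coe_coe, PiTensorProduct.reindex_tprod,
      coordFun_tprod, coordFun_tprod]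
    congr 1
    refine Fintype.prod_equiv σ.symm _ _ fun i => ?_
    rw [Function.comp_apply, Equiv.apply_symm_apply]
  | add x y hx hy =>
    simp only [map_add, hx, hy]

end St18
namespace St18

lemma mem_XrSgn_iff (x : Xr m p) :
    x ∈ XrSgn m p ↔ ∀ (σ : Equiv.Perm (Fin p)) (ε : Fin p → ℤˣ) (j : K m p),
      (∏ i, ((ε i : ℤ) : ℂ) ^ ((j (σ i)) : ℕ)) * coordFun m p (j ∘ σ) x =
        (((Equiv.Perm.sign σ : ℤ) : ℂ) * ∏ i, ((ε i : ℤ) : ℂ)) * coordFun m p j x := by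
  simp only [XrSgn, Submodule.mem_iInf, LinearMap.mem_ker, LinearMap.sub_apply,
    LinearMap.comp_apply, LinearMap.smul_apply, LinearMap.id_apply, sub_eq_zero]
  constructor
  · intro h σ ε j
    rw [← coordFun_perm_eps]
    rw [h σ ε]
    simp [mul_comm]
  · intro h σ ε
    refine coord_inj m p fun j => ?_
    rw [coordFun_perm_eps, h σ ε j]
    simp [mul_comm]

lemma mem_antisym_iff (x : Xr m p) :
    x ∈ antisym m p ↔ ∀ (σ : Equiv.Perm (Fin p)) (j : K m p),
      coordFun m p (j ∘ σ) x = ((Equiv.Perm.sign σ : ℤ) : ℂ) * coordFun m p j x := by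
  simp only [antisym, Submodule.mem_iInf, LinearMap.mem_ker, LinearMap.sub_apply,
    LinearMap.smul_apply, LinearMap.id_apply, sub_eq_zero]
  constructor
  · intro h σ j
    rw [← coordFun_perm, h σ]
    simp [mul_comm]
  · intro h σ
    refine coord_inj m p fun j => ?_
    rw [coordFun_perm, h σ j]
    simp [mul_comm]

end St18
namespace St18

lemma Uodd_vanish {v : Ur m} (hv : v ∈ Uodd m) (j : Fin (2 * m - 1)) (hj : ¬ Odd (j : ℕ)) :
    v j = 0 := by
  induction hv using Submodule.span_induction with
  | mem f hf =>
    obtain ⟨j', hj', rfl⟩ := hf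
    rw [Pi.single_apply, if_neg]
    rintro rfl; exact hj hj'
  | zero => rfl
  | add f g _ _ hf hg => simp [hf, hg]
  | smul c f _ hf => simp [hf]

lemma mem_UoddTensors_iff (x : Xr m p) :
    x ∈ UoddTensors m p ↔ ∀ j : K m p, ¬ (∀ i, Odd ((j i : ℕ))) → coordFun m p j x = 0 := by
  constructor
  · intro hx j hj
    obtain ⟨i₀, hi₀⟩ : ∃ i, ¬ Odd ((j i : ℕ)) := not_forall.mp hj
    induction hx using Submodule.span_induction with
    | mem y hy =>
      obtain ⟨v, hv, rfl⟩ := hy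
      rw [coordFun_tprod]
      exact Finset.prod_eq_zero (Finset.mem_univ i₀) (Uodd_vanish m (hv i₀) _ hi₀)
    | zero => simp
    | add f g _ _ hf hg => simp [hf, hg]
    | smul c f _ hf => simp [hf]
  · intro h
    rw [← expand m p x]
    refine Submodule.sum_mem _ fun k _ => ?_
    by_cases hk : ∀ i, Odd ((k i : ℕ))
    · refine Submodule.smul_mem _ _ (Submodule.subset_span ?_)
      exact ⟨fun i => Pi.single (k i) 1,
        fun i => Submodule.subset_span ⟨k i, hk i, rfl⟩, rfl⟩
    · rw [h k hk, zero_smul]; exact Submodule.zero_mem _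

/-- key: odd power of a sign unit -/
lemma units_pow_odd (e : ℤˣ) {t : ℕ} (ht : Odd t) : ((e : ℤ) : ℂ) ^ t = ((e : ℤ) : ℂ) := by
  rcases Int.units_eq_one_or e with h | h <;> simp [h, ht.neg_one_pow]

lemma cond_equiv (c : K m p → ℂ) :
    (∀ (σ : Equiv.Perm (Fin p)) (ε : Fin p → ℤˣ) (j : K m p),
      (∏ i, ((ε i : ℤ) : ℂ) ^ ((j (σ i)) : ℕ)) * c (j ∘ σ) =
        (((Equiv.Perm.sign σ : ℤ) : ℂ) * ∏ i, ((ε i : ℤ) : ℂ)) * c j) ↔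
    ((∀ j : K m p, ¬ (∀ i, Odd ((j i : ℕ))) → c j = 0) ∧
      (∀ (σ : Equiv.Perm (Fin p)) (j : K m p),
        c (j ∘ σ) = ((Equiv.Perm.sign σ : ℤ) : ℂ) * c j)) := by
  constructor
  · intro h
    constructor
    · intro j hj
      obtain ⟨i₀, hi₀⟩ : ∃ i, ¬ Odd ((j i : ℕ)) := not_forall.mp hj
      have := h 1 (fun i => if i = i₀ then -1 else 1) j
      simp only [Equiv.Perm.one_apply, map_one] at this
      have hcomp : j ∘ ⇑(1 : Equiv.Perm (Fin p)) = j := by funext i; rfl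
      rw [hcomp] at this
      rw [Finset.prod_eq_single i₀ (fun b _ hb => by simp [hb])
          (fun hb => absurd (Finset.mem_univ i₀) hb),
        Finset.prod_eq_single i₀ (fun b _ hb => by simp [hb])
          (fun hb => absurd (Finset.mem_univ i₀) hb)] at this
      simp only [eq_self_iff_true, if_true, Units.val_neg, Units.val_one, Int.cast_neg, Int.cast_one,
        (Nat.not_odd_iff_even.mp hi₀).neg_one_pow, one_mul, mul_neg_one, mul_neg] at this
      linear_combination this / 2
    · intro σ j
      have := h σ (fun _ => 1) j
      simpa using this
  · rintro ⟨h0, h1⟩ σ ε j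
    by_cases hodd : ∀ i, Odd ((j i : ℕ))
    · have hpow : (∏ i, ((ε i : ℤ) : ℂ) ^ ((j (σ i)) : ℕ)) = ∏ i, ((ε i : ℤ) : ℂ) :=
        Finset.prod_congr rfl fun i _ => units_pow_odd (ε i) (hodd (σ i))
      rw [hpow, h1 σ j]
      ring
    · have hj : c j = 0 := h0 j hodd
      have hjσ : c (j ∘ σ) = 0 := by
        refine h0 _ fun hall => hodd fun i => ?_
        simpa using hall (σ.symm i)
      rw [hj, hjσ, mul_zero, mul_zero]

lemma mem_XrSgn_iff' (x : Xr m p) :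
    x ∈ XrSgn m p ↔ x ∈ UoddTensors m p ⊓ antisym m p := by
  rw [Submodule.mem_inf, mem_UoddTensors_iff, mem_antisym_iff, mem_XrSgn_iff]
  exact cond_equiv m p fun k => coordFun m p k x

end St18
namespace St18

abbrev Sset (m p : ℕ) := {k : K m p // StrictMono k ∧ ∀ i, Odd ((k i : ℕ))}

noncomputable instance : Fintype (Sset m p) := Fintype.ofFinite _

def aS (s : Sset m p) : Xr m p :=
  ∑ σ : Equiv.Perm (Fin p), ((Equiv.Perm.sign σ : ℤ) : ℂ) • T m p (s.1 ∘ σ)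

lemma comp_eq_iff (s t : Sset m p) (σ : Equiv.Perm (Fin p)) :
    t.1 = s.1 ∘ σ ↔ s = t ∧ σ = 1 := by
  constructor
  · intro h
    have hrange : Set.range (s.1 ∘ ⇑σ) = Set.range s.1 := by
      rw [Set.range_comp, σ.surjective.range_eq, Set.image_univ]
    have hmono : StrictMono (s.1 ∘ ⇑σ) := h ▸ t.2.1
    have hst : s.1 = t.1 := by
      haveI : WellFoundedLT (Fin p) := inferInstance
      exact (StrictMono.range_inj s.2.1 t.2.1).mp (by rw [h, hrange])
    have hσ : σ = 1 := by
      refine Equiv.ext fun i => ?_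
      have h2 := congrFun h i
      rw [← hst] at h2
      exact s.2.1.injective h2.symm
    exact ⟨Subtype.ext hst, hσ⟩
  · rintro ⟨rfl, rfl⟩
    funext i; rfl

lemma coordFun_aS (s t : Sset m p) :
    coordFun m p t.1 (aS m p s) = if s = t then 1 else 0 := by
  rw [aS, map_sum]
  simp only [map_smul, coordFun_T, smul_eq_mul]
  by_cases h : s = t
  · subst h
    rw [if_pos rfl, Finset.sum_eq_single (1 : Equiv.Perm (Fin p))]
    · rw [if_pos ((comp_eq_iff m p s s 1).mpr ⟨rfl, rfl⟩)]
      simp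
    · intro σ _ hσ
      rw [if_neg fun hc => hσ ((comp_eq_iff m p s s σ).mp hc).2, mul_zero]
    · intro hb; exact absurd (Finset.mem_univ _) hb
  · rw [if_neg h]
    refine Finset.sum_eq_zero fun σ _ => ?_
    rw [if_neg fun hc => h ((comp_eq_iff m p s t σ).mp hc).1, mul_zero]

lemma coordFun_aS' (s : Sset m p) (j : K m p) :
    coordFun m p j (aS m p s) =
      ∑ σ : Equiv.Perm (Fin p), ((Equiv.Perm.sign σ : ℤ) : ℂ) *
        (if j = s.1 ∘ σ then 1 else 0) := by
  rw [aS, map_sum]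
  simp only [map_smul, coordFun_T, smul_eq_mul]

lemma comp_right_cancel (f g : K m p) (τ : Equiv.Perm (Fin p)) :
    f ∘ ⇑τ = g ∘ ⇑τ ↔ f = g := by
  constructor
  · intro h
    funext i
    have := congrFun h (τ.symm i)
    simpa using this
  · rintro rfl; rfl

lemma aS_mem (s : Sset m p) : aS m p s ∈ XrSgn m p := by
  rw [mem_XrSgn_iff]
  refine (cond_equiv m p fun k => coordFun m p k (aS m p s)).mpr ⟨?_, ?_⟩
  · intro j hj
    rw [coordFun_aS']
    refine Finset.sum_eq_zero fun σ _ => ?_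
    rw [if_neg, mul_zero]
    rintro rfl
    exact hj fun i => s.2.2 (σ i)
  · intro τ j
    rw [coordFun_aS', coordFun_aS', Finset.mul_sum]
    refine Fintype.sum_equiv (Equiv.mulRight τ⁻¹) _ _ fun σ => ?_
    have hco : (s.1 ∘ ⇑(σ * τ⁻¹)) ∘ ⇑τ = s.1 ∘ ⇑σ := by
      funext i
      simp [Equiv.Perm.mul_apply]
    have h1 : (j = s.1 ∘ ⇑(σ * τ⁻¹)) ↔ (j ∘ ⇑τ = s.1 ∘ ⇑σ) := by
      rw [← comp_right_cancel m p j (s.1 ∘ ⇑(σ * τ⁻¹)) τ, hco]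
    have h2 : ((Equiv.Perm.sign τ : ℤ) : ℂ) * ((Equiv.Perm.sign (σ * τ⁻¹) : ℤ) : ℂ) =
        ((Equiv.Perm.sign σ : ℤ) : ℂ) := by
      have h3 : Equiv.Perm.sign τ * Equiv.Perm.sign (σ * τ⁻¹) = Equiv.Perm.sign σ := by
        rw [map_mul, map_inv, mul_comm (Equiv.Perm.sign σ), mul_inv_cancel_left]
      push_cast [← h3]
      ring
    simp only [Equiv.coe_mulRight]
    show _ = ((Equiv.Perm.sign τ : ℤ) : ℂ) * (((Equiv.Perm.sign (σ * τ⁻¹) : ℤ) : ℂ) *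
      if j = s.1 ∘ ⇑(σ * τ⁻¹) then 1 else 0)
    by_cases hc : j ∘ ⇑τ = s.1 ∘ ⇑σ
    · rw [if_pos hc, if_pos (h1.mpr hc), mul_one, ← mul_assoc, h2, mul_one]
    · rw [if_neg hc, if_neg (fun hh => hc (h1.mp hh))]
      ring

lemma sign_cast_ne_zero (σ : Equiv.Perm (Fin p)) :
    ((Equiv.Perm.sign σ : ℤ) : ℂ) ≠ 0 := by
  rcases Int.units_eq_one_or (Equiv.Perm.sign σ) with h | h <;> simp [h]

lemma eq_zero_of_vanish (x : Xr m p) (hx : x ∈ XrSgn m p)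
    (hv : ∀ s : Sset m p, coordFun m p s.1 x = 0) : x = 0 := by
  rw [mem_XrSgn_iff] at hx
  obtain ⟨h0, h1⟩ := (cond_equiv m p fun k => coordFun m p k x).mp hx
  refine coord_inj m p fun j => ?_
  rw [map_zero]
  by_cases hodd : ∀ i, Odd ((j i : ℕ))
  · by_cases hinj : Function.Injective j
    · set σ := Tuple.sort j with hσ
      have hsm : StrictMono (j ∘ ⇑σ) :=
        (Tuple.monotone_sort j).strictMono_of_injective (hinj.comp σ.injective)
      have hvs := hv ⟨j ∘ ⇑σ, hsm, fun i => hodd (σ i)⟩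
      have := h1 σ j
      rw [hvs] at this
      exact (mul_eq_zero.mp this.symm).resolve_left (sign_cast_ne_zero p σ)
    · obtain ⟨a, b, hab, hne⟩ := Function.not_injective_iff.mp hinj
      have hcomp : j ∘ ⇑(Equiv.swap a b) = j := by
        funext i
        by_cases hia : i = a
        · subst hia; simp [Equiv.swap_apply_left, hab.symm]
        · by_cases hib : i = b
          · subst hib; simp [Equiv.swap_apply_right, hab]
          · simp [Equiv.swap_apply_of_ne_of_ne hia hib]
      have := h1 (Equiv.swap a b) j
      rw [hcomp, Equiv.Perm.sign_swap hne] at this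
      simp only [Units.val_neg, Units.val_one, Int.cast_neg, Int.cast_one, neg_one_mul] at this
      linear_combination this / 2
  · exact h0 j hodd

end St18
namespace St18

def Phi : XrSgn m p →ₗ[ℂ] (Sset m p → ℂ) :=
  LinearMap.pi fun s => (coordFun m p s.1).comp (Submodule.subtype (XrSgn m p))

lemma Phi_bijective : Function.Bijective (Phi m p) := by
  constructor
  · intro x y hxy
    have hmem : (x : Xr m p) - (y : Xr m p) ∈ XrSgn m p := sub_mem x.2 y.2
    have hz : (x : Xr m p) - (y : Xr m p) = 0 := by
      refine eq_zero_of_vanish m p _ hmem fun s => ?_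
      rw [map_sub]
      have := congrFun hxy s
      simp only [Phi, LinearMap.pi_apply, LinearMap.comp_apply, Submodule.coe_subtype] at this
      rw [this, sub_self]
    exact Subtype.ext (sub_eq_zero.mp hz)
  · intro d
    refine ⟨∑ s, d s • ⟨aS m p s, aS_mem m p s⟩, funext fun t => ?_⟩
    rw [map_sum]
    simp only [map_smul, Finset.sum_apply, Pi.smul_apply, smul_eq_mul]
    have : ∀ s : Sset m p, Phi m p ⟨aS m p s, aS_mem m p s⟩ t = if s = t then 1 else 0 := by
      intro s
      exact coordFun_aS m p s t
    rw [Finset.sum_congr rfl fun s _ => by rw [this s]]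
    simp

def eL : XrSgn m p ≃ₗ[ℂ] (Sset m p → ℂ) :=
  LinearEquiv.ofBijective (Phi m p) (Phi_bijective m p)

def equiv1 : Sset m p ≃ {g : Fin p → Fin (m - 1) // StrictMono g} where
  toFun s := ⟨fun i => ⟨(s.1 i : ℕ) / 2, by
      have h := (s.2.2 i); have h2 := (s.1 i).isLt
      rw [Nat.odd_iff] at h; omega⟩, by
    intro a b hab
    have h1 := s.2.1 hab
    have ha := s.2.2 a; have hb := s.2.2 b
    rw [Nat.odd_iff] at ha hb
    rw [Fin.lt_def] at h1 ⊢
    simp only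
    omega⟩
  invFun g := ⟨fun i => ⟨2 * (g.1 i : ℕ) + 1, by have := (g.1 i).isLt; omega⟩, by
    constructor
    · intro a b hab
      have h1 := g.2 hab
      rw [Fin.lt_def] at h1 ⊢
      show 2 * (g.1 a : ℕ) + 1 < 2 * (g.1 b : ℕ) + 1
      omega
    · intro i
      show Odd (2 * (g.1 i : ℕ) + 1)
      rw [Nat.odd_iff]
      omega⟩
  left_inv s := by
    refine Subtype.ext (funext fun i => Fin.ext ?_)
    have h := s.2.2 i
    rw [Nat.odd_iff] at h
    show 2 * ((s.1 i : ℕ) / 2) + 1 = (s.1 i : ℕ)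
    omega
  right_inv g := by
    refine Subtype.ext (funext fun i => Fin.ext ?_)
    show (2 * (g.1 i : ℕ) + 1) / 2 = (g.1 i : ℕ)
    omega

def equiv2 : {g : Fin p → Fin (m - 1) // StrictMono g} ≃
    {t : Finset (Fin (m - 1)) // t.card = p} where
  toFun g := ⟨Finset.image g.1 Finset.univ, by
    rw [Finset.card_image_of_injective _ g.2.injective, Finset.card_univ, Fintype.card_fin]⟩
  invFun t := ⟨⇑(t.1.orderEmbOfFin t.2), (t.1.orderEmbOfFin t.2).strictMono⟩
  left_inv g := by
    refine Subtype.ext ?_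
    exact (Finset.orderEmbOfFin_unique _
      (fun x => Finset.mem_image_of_mem _ (Finset.mem_univ x)) g.2).symm
  right_inv t := by
    refine Subtype.ext (Finset.coe_inj.mp ?_)
    rw [Finset.coe_image, Finset.coe_univ, Set.image_univ, Finset.range_orderEmbOfFin]

lemma card_Sset : Fintype.card (Sset m p) = (m - 1).choose p := by
  rw [Fintype.card_congr ((equiv1 m p).trans (equiv2 m p)), Fintype.card_finset_len,
    Fintype.card_fin]

lemma finrank_XrSgn : Module.finrank ℂ (XrSgn m p) = (m - 1).choose p := by
  rw [(eL m p).finrank_eq, Module.finrank_pi, card_Sset]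

end St18


theorem sgn_isotypic_of_Xr (hp : 2 ≤ p) (hm : 1 ≤ m) :
    XrSgn m p = UoddTensors m p ⊓ antisym m p ∧
    (XrSgn m p = ⊥ ↔ m < p + 1) ∧
    (p + 1 ≤ m → Module.finrank ℂ (XrSgn m p) = (m - 1).choose p) := by
  refine ⟨?_, ⟨?_, ?_⟩, fun _ => St18.finrank_XrSgn m p⟩
  · ext x
    exact St18.mem_XrSgn_iff' m p x
  · intro h
    by_contra hge
    push_neg at hge
    have hple : p ≤ m - 1 := by omega
    obtain ⟨t, -, ht⟩ := Finset.exists_subset_card_eq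
      (show p ≤ (Finset.univ : Finset (Fin (m - 1))).card by
        rw [Finset.card_univ, Fintype.card_fin]; exact hple)
    set s : St18.Sset m p := (St18.equiv1 m p).symm ((St18.equiv2 m p).symm ⟨t, ht⟩)
    have h1 : St18.coordFun m p s.1 (St18.aS m p s) = 1 := by
      rw [St18.coordFun_aS]
      simp
    have h0 : St18.aS m p s = 0 := by
      have hmem := St18.aS_mem m p s
      rw [h, Submodule.mem_bot] at hmem
      exact hmem
    rw [h0, map_zero] at h1
    exact zero_ne_one h1
  · intro hlt
    rw [Submodule.eq_bot_iff]
    intro x hx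
    refine St18.eq_zero_of_vanish m p x hx fun s => ?_
    exfalso
    have hinj := ((St18.equiv1 m p) s).2.injective
    have := Fintype.card_le_of_injective _ hinj
    simp only [Fintype.card_fin] at this
    omega

end
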